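/- The natural right action of the free group F_n (n ≥ 2) on the set of coset partitions of F_n by finite-index subgroups, given by (H_i α_i)_{i=1..s} · w = (H_i α_i w)_{i=1..s}, is faithful: if w ∈ F_n satisfies P · w = P for every such coset partition P, then w = 1. -/

import Mathlib

/-- The right coset `Hα = {hα : h ∈ H}` of a subgroup `H`. -/
def rcoset {G : Type*} [Group G] (H : Subgroup G) (α : G) : Set G := {g | g * α⁻¹ ∈ H}

/-- `{H_i α_i}` is a coset partition of `G`: every element lies in exactly one coset. -/
def IsCosetPartition {G : Type*} [Group G] {s : ℕ} (H : Fin s → Subgroup G)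
    (α : Fin s → G) : Prop :=
  ∀ g : G, ∃! i : Fin s, g ∈ rcoset (H i) (α i)

lemma exists_perm_extend {α : Type*} [Finite α] (s : Set α) (f : α → α)
    (hf : Set.InjOn f s) : ∃ σ : Equiv.Perm α, ∀ x ∈ s, σ x = f x := by
  classical
  have := Fintype.ofFinite α
  have h1 : Function.Bijective (fun x : s => (⟨f x, Set.mem_image_of_mem f x.2⟩ : f '' s)) := by
    constructor
    · rintro ⟨x, hx⟩ ⟨y, hy⟩ h
      exact Subtype.ext (hf hx hy (by simpa using congrArg Subtype.val h))
    · rintro ⟨y, hy⟩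
      obtain ⟨x, hx, rfl⟩ := hy
      exact ⟨⟨x, hx⟩, rfl⟩
  let e1 : s ≃ (f '' s) := Equiv.ofBijective _ h1
  have hc : Fintype.card (↥sᶜ) = Fintype.card (↥(f '' s)ᶜ) := by
    rw [Fintype.card_compl_set, Fintype.card_compl_set, Fintype.card_congr e1]
  let e2 : (↥sᶜ) ≃ (↥(f '' s)ᶜ) := Fintype.equivOfCardEq hc
  refine ⟨(Equiv.Set.sumCompl s).symm.trans ((e1.sumCongr e2).trans (Equiv.Set.sumCompl (f '' s))), ?_⟩
  intro x hx
  simp [Equiv.Set.sumCompl_symm_apply_of_mem hx, e1]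

set_option maxHeartbeats 1000000 in
lemma freeGroup_exists_finiteIndex_not_mem {β : Type} (w : FreeGroup β) (hw : w ≠ 1) :
    ∃ M : Subgroup (FreeGroup β), M.FiniteIndex ∧ w ∉ M := by
  classical
  set L := w.toWord with hLdef
  set k := L.length with hkdef
  have hk1 : 1 ≤ k := by
    have hne : L ≠ [] := fun h => hw (FreeGroup.toWord_eq_nil_iff.mp h)
    have := List.length_pos_iff.mpr hne
    omega
  -- reducedness: no adjacent cancelling pair
  have hred : ∀ (i : ℕ) (x : β) (b : Bool),
      L[i]? = some (x, b) → L[i + 1]? = some (x, !b) → False := by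
    intro i x b h1 h2
    have hi1 : i + 1 < L.length := (List.getElem?_eq_some_iff.mp h2).1
    have hi : i < L.length := by omega
    have e1 : L[i] = (x, b) := by
      have := List.getElem?_eq_getElem hi
      rw [h1] at this; exact (Option.some_injective _ this).symm
    have e2 : L[i + 1] = (x, !b) := by
      have := List.getElem?_eq_getElem hi1
      rw [h2] at this; exact (Option.some_injective _ this).symm
    have hdec : L = L.take i ++ (x, b) :: (x, !b) :: L.drop (i + 2) := by
      conv_lhs => rw [← List.take_append_drop i L]
      rw [List.drop_eq_getElem_cons hi, e1, List.drop_eq_getElem_cons hi1, e2]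
    have hLred : FreeGroup.reduce L = L := FreeGroup.reduce_toWord w
    exact FreeGroup.reduce.not (hLred.trans hdec)
  -- permutations
  have hσ : ∀ a : β, ∃ σ : Equiv.Perm (Fin (k + 1)),
      (∀ j : Fin (k + 1), (h1 : j.val < k) → (h2 : L[k - 1 - j.val]? = some (a, true)) →
        σ j = ⟨j.val + 1, by omega⟩) ∧
      (∀ j : Fin (k + 1), (h1 : 1 ≤ j.val) → (h2 : L[k - j.val]? = some (a, false)) →
        σ j = ⟨j.val - 1, by have := j.2; omega⟩) := by
    intro a
    set fa : Fin (k + 1) → Fin (k + 1) := fun j =>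
      if h : j.val < k ∧ L[k - 1 - j.val]? = some (a, true) then ⟨j.val + 1, by omega⟩
      else if h2 : 1 ≤ j.val ∧ L[k - j.val]? = some (a, false) then
        ⟨j.val - 1, by have := j.2; omega⟩
      else j with hfa
    set S : Set (Fin (k + 1)) := {j | (j.val < k ∧ L[k - 1 - j.val]? = some (a, true)) ∨
      (1 ≤ j.val ∧ L[k - j.val]? = some (a, false))} with hS
    have hnotboth : ∀ j : Fin (k + 1),
        (j.val < k ∧ L[k - 1 - j.val]? = some (a, true)) →
        (1 ≤ j.val ∧ L[k - j.val]? = some (a, false)) → False := by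
      rintro j ⟨hj1, hj2⟩ ⟨hj3, hj4⟩
      have : k - 1 - j.val + 1 = k - j.val := by omega
      exact hred _ a true hj2 (by rw [this]; simpa using hj4)
    have hup : ∀ j : Fin (k + 1), (h1 : j.val < k) → (h2 : L[k - 1 - j.val]? = some (a, true)) →
        fa j = ⟨j.val + 1, by omega⟩ := by
      intro j h1 h2
      rw [hfa]; simp only [dif_pos (And.intro h1 h2)]
    have hdown : ∀ j : Fin (k + 1), 1 ≤ j.val → L[k - j.val]? = some (a, false) →
        fa j = ⟨j.val - 1, by omega⟩ := by
      intro j h1 h2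
      have hc : ¬(j.val < k ∧ L[k - 1 - j.val]? = some (a, true)) :=
        fun hc => hnotboth j hc ⟨h1, h2⟩
      simp only [hfa, dif_neg hc, dif_pos (And.intro h1 h2)]
    have hinj : Set.InjOn fa S := by
      rintro j hj j' hj' heq
      rcases hj with hj | hj
      · rcases hj' with hj' | hj'
        · rw [hup j hj.1 hj.2, hup j' hj'.1 hj'.2] at heq
          exact Fin.ext (by have := congrArg Fin.val heq; simpa using this)
        · rw [hup j hj.1 hj.2, hdown j' hj'.1 hj'.2] at heq
          have hv : j.val + 1 = j'.val - 1 := congrArg Fin.val heq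
          -- j' = j + 2 : adjacent cancelling pair
          have h1 : k - j'.val + 1 = k - 1 - j.val := by omega
          exact absurd hj.2 (fun hc => hred _ a false hj'.2 (by rw [h1]; simpa using hc))
      · rcases hj' with hj' | hj'
        · rw [hdown j hj.1 hj.2, hup j' hj'.1 hj'.2] at heq
          have hv : j.val - 1 = j'.val + 1 := congrArg Fin.val heq
          have h1 : k - j.val + 1 = k - 1 - j'.val := by omega
          exact absurd hj'.2 (fun hc => hred _ a false hj.2 (by rw [h1]; simpa using hc))
        · rw [hdown j hj.1 hj.2, hdown j' hj'.1 hj'.2] at heq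
          have hv : j.val - 1 = j'.val - 1 := congrArg Fin.val heq
          exact Fin.ext (by omega)
    obtain ⟨σ, hσ⟩ := exists_perm_extend S fa hinj
    refine ⟨σ, fun j h1 h2 => ?_, fun j h1 h2 => ?_⟩
    · rw [hσ j (Or.inl ⟨h1, h2⟩), hup j h1 h2]
    · rw [hσ j (Or.inr ⟨h1, h2⟩), hdown j h1 h2]
  choose σ hσup hσdown using hσ
  set φ : FreeGroup β →* Equiv.Perm (Fin (k + 1)) := FreeGroup.lift σ with hφ
  have key : ∀ d m : ℕ, (hm : m + d = k) →
      φ (FreeGroup.mk (L.drop m)) ⟨0, by omega⟩ = ⟨d, by omega⟩ := by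
    intro d
    induction d with
    | zero =>
      intro m hm
      have h0 : L.drop m = [] := List.drop_eq_nil_of_le (by omega)
      rw [h0]
      have h1 : FreeGroup.mk ([] : List (β × Bool)) = 1 := rfl
      rw [h1, map_one]
      rfl
    | succ d ih =>
      intro m hm
      have hmk : m < k := by omega
      rcases hp : L[m]'hmk with ⟨a, b⟩
      have hgm : L[m]? = some (a, b) := by rw [List.getElem?_eq_getElem hmk, hp]
      have hdrop : L.drop m = L[m]'hmk :: L.drop (m + 1) := List.drop_eq_getElem_cons hmk
      have hsplit : FreeGroup.mk (L.drop m) =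
          FreeGroup.mk [(a, b)] * FreeGroup.mk (L.drop (m + 1)) := by
        rw [FreeGroup.mul_mk, hdrop, hp]
        rfl
      rw [hsplit, map_mul, Equiv.Perm.mul_apply, ih (m + 1) (by omega)]
      have hφs : φ (FreeGroup.mk [(a, b)]) = cond b (σ a) (σ a)⁻¹ := by
        rw [hφ, FreeGroup.lift_mk]
        simp
      rw [hφs]
      cases b with
      | true =>
        have h1 : ((⟨d, by omega⟩ : Fin (k + 1)) : ℕ) < k := by simp; omega
        have h2 : L[k - 1 - ((⟨d, by omega⟩ : Fin (k + 1)) : ℕ)]? = some (a, true) := by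
          have he : k - 1 - d = m := by omega
          simpa [he] using hgm
        have := hσup a ⟨d, by omega⟩ h1 h2
        rw [show (cond true (σ a) (σ a)⁻¹) = σ a from rfl, this]
      | false =>
        have h2 : L[k - ((⟨d + 1, by omega⟩ : Fin (k + 1)) : ℕ)]? = some (a, false) := by
          have he : k - (d + 1) = m := by omega
          simpa [he] using hgm
        have hs := hσdown a ⟨d + 1, by omega⟩ (by simp) h2
        have hs' : σ a ⟨d + 1, by omega⟩ = ⟨d, by omega⟩ := by
          rw [hs]; apply Fin.ext; simp
        rw [show (cond false (σ a) (σ a)⁻¹) = (σ a)⁻¹ from rfl, ← hs',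
          Equiv.Perm.inv_def, Equiv.symm_apply_apply]
  have hφw : φ w ⟨0, by omega⟩ = ⟨k, by omega⟩ := by
    have := key k 0 (by omega)
    have hLw : FreeGroup.mk L = w := by rw [hLdef]; exact FreeGroup.mk_toWord
    rwa [List.drop_zero, hLw] at this
  refine ⟨φ.ker, Subgroup.finiteIndex_ker φ, fun hmem => ?_⟩
  rw [MonoidHom.mem_ker] at hmem
  rw [hmem] at hφw
  have := congrArg Fin.val hφw
  simp at this
  omega

lemma mem_rcoset {G : Type*} [Group G] {H : Subgroup G} {α g : G} :
    g ∈ rcoset H α ↔ g * α⁻¹ ∈ H := Iff.rfl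

lemma subgroup_le_of_rcoset_eq {G : Type*} [Group G] {H H' : Subgroup G} {α β : G}
    (h : rcoset H α = rcoset H' β) : ∀ x ∈ H, x ∈ H' := by
  have hα : α ∈ rcoset H α := by rw [mem_rcoset, mul_inv_cancel]; exact one_mem H
  rw [h] at hα
  intro x hx
  have hxα : x * α ∈ rcoset H α := by
    rw [mem_rcoset, mul_assoc, mul_inv_cancel, mul_one]; exact hx
  rw [h] at hxα
  rw [mem_rcoset] at hα hxα
  have hx' : (x * α * β⁻¹) * (α * β⁻¹)⁻¹ ∈ H' := mul_mem hxα (inv_mem hα)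
  have he : (x * α * β⁻¹) * (α * β⁻¹)⁻¹ = x := by group
  rwa [he] at hx'

lemma subgroup_eq_of_rcoset_eq {G : Type*} [Group G] {H H' : Subgroup G} {α β : G}
    (h : rcoset H α = rcoset H' β) : H = H' :=
  Subgroup.ext fun x => ⟨fun hx => subgroup_le_of_rcoset_eq h x hx,
    fun hx => subgroup_le_of_rcoset_eq h.symm x hx⟩

lemma mem_rcoset_out {G : Type*} [Group G] {K : Subgroup G} (g : G) (q : G ⧸ K) :
    g ∈ rcoset K (Quotient.out q)⁻¹ ↔ (QuotientGroup.mk g⁻¹ : G ⧸ K) = q := by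
  rw [mem_rcoset, inv_inv]
  conv_rhs => rw [← QuotientGroup.out_eq' q]
  rw [QuotientGroup.eq, inv_inv]

lemma out_mem_iff {G : Type*} [Group G] {K N : Subgroup G} (hKN : K ≤ N) (g : G) :
    Quotient.out (QuotientGroup.mk g⁻¹ : G ⧸ K) ∈ N ↔ g ∈ N := by
  set u := Quotient.out (QuotientGroup.mk g⁻¹ : G ⧸ K) with hu
  have h1 : (QuotientGroup.mk u : G ⧸ K) = QuotientGroup.mk g⁻¹ :=
    QuotientGroup.out_eq' _
  rw [eq_comm, QuotientGroup.eq] at h1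
  have hc : (g⁻¹)⁻¹ * u ∈ N := hKN h1
  rw [inv_inv] at hc
  constructor
  · intro h
    have : g * u * u⁻¹ ∈ N := mul_mem hc (inv_mem h)
    rwa [mul_inv_cancel_right] at this
  · intro h
    have : g⁻¹ * (g * u) ∈ N := mul_mem (inv_mem h) hc
    rwa [inv_mul_cancel_left] at this

/-- The natural right action of `F_n` (`n ≥ 2`) on the set of coset partitions of `F_n`
by finite-index subgroups, `{H_i α_i} · w = {H_i α_i w}`, is faithful. -/
theorem faithful_action_on_coset_partitions (n : ℕ) (hn : 2 ≤ n) (w : FreeGroup (Fin n))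
    (hw : ∀ (s : ℕ) (H : Fin s → Subgroup (FreeGroup (Fin n)))
      (α : Fin s → FreeGroup (Fin n)),
      (∀ i, (H i).FiniteIndex) → IsCosetPartition H α →
      (Set.range fun i => rcoset (H i) (α i * w)) = Set.range fun i => rcoset (H i) (α i)) :
    w = 1 := by
  classical
  by_contra hw1
  obtain ⟨N, hNfin, hNw⟩ := freeGroup_exists_finiteIndex_not_mem w hw1
  haveI := hNfin
  have hGinf : Infinite (FreeGroup (Fin n)) := by
    have : Nonempty (Fin n) := ⟨⟨0, by omega⟩⟩
    infer_instance
  have hNbot : N ≠ ⊥ := by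
    intro h
    refine hNfin.index_ne_zero ?_
    rw [h, Subgroup.index_bot, Nat.card_eq_zero_of_infinite]
  obtain ⟨x, hxN, hx1⟩ := (Subgroup.bot_or_exists_ne_one N).resolve_left hNbot
  obtain ⟨M, hMfin, hMx⟩ := freeGroup_exists_finiteIndex_not_mem x hx1
  haveI := hMfin
  set K : Subgroup (FreeGroup (Fin n)) := N ⊓ M with hK
  haveI hKfin : K.FiniteIndex := inferInstance
  have hKle : K ≤ N := inf_le_left
  have hKN : K ≠ N := by
    intro h
    exact hMx ((h.symm ▸ hxN : x ∈ K).2)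
  haveI : Finite (FreeGroup (Fin n) ⧸ K) := K.finite_quotient_of_finiteIndex
  haveI := Fintype.ofFinite {q : FreeGroup (Fin n) ⧸ K // Quotient.out q ∉ N}
  obtain ⟨s, ⟨e'⟩⟩ := Finite.exists_equiv_fin
    (Option {q : FreeGroup (Fin n) ⧸ K // Quotient.out q ∉ N})
  set e := e'.symm with he
  set H : Fin s → Subgroup (FreeGroup (Fin n)) := fun i => (e i).elim N (fun _ => K) with hH
  set α : Fin s → FreeGroup (Fin n) :=
    fun i => (e i).elim 1 (fun q => (Quotient.out q.val)⁻¹) with hα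
  have hHj : ∀ (j : Fin s) q, e j = some q → H j = K ∧ α j = (Quotient.out q.val)⁻¹ := by
    intro j q hej
    constructor <;> simp only [hH, hα, hej, Option.elim_some]
  have hHn : ∀ (j : Fin s), e j = none → H j = N ∧ α j = 1 := by
    intro j hej
    constructor <;> simp only [hH, hα, hej, Option.elim_none]
  have hfin : ∀ i, (H i).FiniteIndex := by
    intro i
    cases hei : e i with
    | none => rw [(hHn i hei).1]; exact hNfin
    | some q => rw [(hHj i q hei).1]; exact hKfin
  have hpart : IsCosetPartition H α := by
    intro g
    by_cases hgN : g ∈ N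
    · refine ⟨e.symm none, ?_, ?_⟩
      · obtain ⟨h1, h2⟩ := hHn (e.symm none) (e.apply_symm_apply none)
        show g ∈ rcoset (H (e.symm none)) (α (e.symm none))
        rw [h1, h2]
        simpa [mem_rcoset] using hgN
      · intro j hj
        cases hej : e j with
        | none =>
          have := congrArg e.symm hej
          rwa [Equiv.symm_apply_apply] at this
        | some q =>
          exfalso
          obtain ⟨h1, h2⟩ := hHj j q hej
          rw [h1, h2] at hj
          have hq := (mem_rcoset_out g q.val).mp hj
          exact q.2 (hq ▸ (out_mem_iff hKle g).mpr hgN)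
    · have hq0 : Quotient.out (QuotientGroup.mk g⁻¹ : FreeGroup (Fin n) ⧸ K) ∉ N :=
        fun h => hgN ((out_mem_iff hKle g).mp h)
      refine ⟨e.symm (some ⟨QuotientGroup.mk g⁻¹, hq0⟩), ?_, ?_⟩
      · obtain ⟨h1, h2⟩ := hHj (e.symm (some ⟨QuotientGroup.mk g⁻¹, hq0⟩)) _
          (e.apply_symm_apply _)
        show g ∈ rcoset (H _) (α _)
        rw [h1, h2]
        exact (mem_rcoset_out g (QuotientGroup.mk g⁻¹)).mpr rfl
      · intro j hj
        cases hej : e j with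
        | none =>
          exfalso
          obtain ⟨h1, h2⟩ := hHn j hej
          rw [h1, h2] at hj
          exact hgN (by simpa [mem_rcoset] using hj)
        | some q =>
          obtain ⟨h1, h2⟩ := hHj j q hej
          rw [h1, h2] at hj
          have hq := (mem_rcoset_out g q.val).mp hj
          have hqq : (some q : Option {q : FreeGroup (Fin n) ⧸ K // Quotient.out q ∉ N}) =
              some ⟨QuotientGroup.mk g⁻¹, hq0⟩ := by
            congr 1
            exact Subtype.ext hq.symm
          have := congrArg e.symm (hej.trans hqq)
          rwa [Equiv.symm_apply_apply] at this
  have hrange := hw s H α hfin hpart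
  have h0 : rcoset N w ∈ Set.range fun i => rcoset (H i) (α i * w) := by
    refine ⟨e.symm none, ?_⟩
    obtain ⟨h1, h2⟩ := hHn (e.symm none) (e.apply_symm_apply none)
    show rcoset (H _) (α _ * w) = _
    rw [h1, h2, one_mul]
  rw [hrange] at h0
  obtain ⟨i, hi⟩ := h0
  cases hei : e i with
  | none =>
    obtain ⟨h1, h2⟩ := hHn i hei
    rw [show (fun i => rcoset (H i) (α i)) i = rcoset (H i) (α i) from rfl, h1, h2] at hi
    have hwmem : w ∈ rcoset N w := by rw [mem_rcoset, mul_inv_cancel]; exact one_mem N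
    rw [← hi] at hwmem
    exact hNw (by simpa [mem_rcoset] using hwmem)
  | some q =>
    obtain ⟨h1, h2⟩ := hHj i q hei
    rw [show (fun i => rcoset (H i) (α i)) i = rcoset (H i) (α i) from rfl, h1, h2] at hi
    exact hKN (subgroup_eq_of_rcoset_eq hi)
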